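/- arXiv:2105.12021 — 2 statements merged into one kernel-verified Lean document; each statement's English description precedes it below -/
import Mathlib

section
/- (Barker–Carlson extreme ray characterization of diagonally dominant matrices) A real symmetric n×n matrix M is diagonally dominant, i.e., M_{ii} ≥ Σ_{j≠i} |M_{ij}| for every i, if and only if M can be written as M = Σ_i α_i v_i v_iᵀ, a finite sum where each α_i ≥ 0 and each v_i ∈ ℝⁿ is a nonzero vector with at most 2 nonzero components, each nonzero component equal to +1 or −1. -/
open Matrix

private lemma sgn_mul_abs (x : ℝ) : Real.sign x * |x| = x := by
  rcases lt_trichotomy x 0 with h | h | h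
  · rw [Real.sign_of_neg h, abs_of_neg h]; ring
  · simp [h]
  · rw [Real.sign_of_pos h, abs_of_pos h]; ring

private lemma sgn_sq_mul_abs (x : ℝ) : Real.sign x * Real.sign x * |x| = |x| := by
  rcases lt_trichotomy x 0 with h | h | h
  · rw [Real.sign_of_neg h]; ring
  · simp [h]
  · rw [Real.sign_of_pos h]; ring

private lemma sgn_mem (x : ℝ) : Real.sign x = 0 ∨ Real.sign x = 1 ∨ Real.sign x = -1 := by
  rcases lt_trichotomy x 0 with h | h | h
  · exact Or.inr (Or.inr (Real.sign_of_neg h))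
  · simp [h]
  · exact Or.inr (Or.inl (Real.sign_of_pos h))

private lemma key_row_bound {n : ℕ} (w : Fin n → ℝ)
    (hcard : (Finset.univ.filter (fun j => w j ≠ 0)).card ≤ 2)
    (hpm : ∀ j, w j = 0 ∨ w j = 1 ∨ w j = -1) (k : Fin n) :
    |w k| * ∑ j ∈ Finset.univ.erase k, |w j| ≤ w k * w k := by
  by_cases hk : w k = 0
  · simp [hk]
  · have habs : |w k| = 1 := by rcases hpm k with h | h | h <;> simp [h] at hk ⊢
    have hsq : w k * w k = 1 := by
      rcases hpm k with h | h | h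
      · exact absurd h hk
      all_goals rw [h]; norm_num
    rw [habs, one_mul, hsq]
    set S : Finset (Fin n) := Finset.univ.filter (fun j => w j ≠ 0) with hS
    have hkS : k ∈ S := by simp [hS, hk]
    have hsum : ∑ j ∈ Finset.univ.erase k, |w j| = ∑ j ∈ S.erase k, |w j| := by
      refine (Finset.sum_subset ?_ ?_).symm
      · intro j hj
        simp only [Finset.mem_erase, hS, Finset.mem_filter] at hj ⊢
        exact ⟨hj.1, Finset.mem_univ j⟩
      · intro j hj hj'
        simp only [Finset.mem_erase, hS, Finset.mem_filter, Finset.mem_univ, true_and,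
          not_and, not_not] at hj hj'
        rw [hj' hj.1, abs_zero]
    rw [hsum]
    calc ∑ j ∈ S.erase k, |w j| ≤ (S.erase k).card • (1 : ℝ) := by
          refine Finset.sum_le_card_nsmul _ _ _ ?_
          intro j _
          rcases hpm j with h | h | h <;> simp [h]
      _ ≤ 1 := by
          rw [Finset.card_erase_of_mem hkS, nsmul_eq_mul, mul_one]
          have : S.card - 1 ≤ 1 := by omega
          exact_mod_cast this

/-- Barker–Carlson: a real symmetric `n × n` matrix `M` is
diagonally dominant, i.e. `M i i ≥ ∑_{j ≠ i} |M i j|` for all `i`, iff `M` is a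
finite conic combination `M = ∑ α_i v_i v_iᵀ` where each `α_i ≥ 0` and each
`v_i ∈ ℝⁿ` is a nonzero vector with at most 2 nonzero components, each equal
to `+1` or `−1`. -/
theorem diagonally_dominant_iff_conic_combination_pm_one_vectors
    (n : ℕ) (M : Matrix (Fin n) (Fin n) ℝ) (hM : Mᵀ = M) :
    (∀ i, ∑ j ∈ Finset.univ.erase i, |M i j| ≤ M i i) ↔
      ∃ (m : ℕ) (α : Fin m → ℝ) (v : Fin m → (Fin n → ℝ)),
        (∀ i, 0 ≤ α i) ∧
        (∀ i, v i ≠ 0) ∧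
        (∀ i, (Finset.univ.filter (fun j => v i j ≠ 0)).card ≤ 2) ∧
        (∀ i j, v i j = 0 ∨ v i j = 1 ∨ v i j = -1) ∧
        M = ∑ i, α i • Matrix.vecMulVec (v i) (v i) := by
  have hMsymm : ∀ i j, M j i = M i j := fun i j => by
    have h := congrFun (congrFun hM j) i
    rw [Matrix.transpose_apply] at h
    exact h.symm
  constructor
  · -- forward direction: dd → decomposition
    intro hdd
    set A : Fin n × Fin n → ℝ := fun p =>
      if p.1 = p.2 then M p.1 p.1 - ∑ j ∈ Finset.univ.erase p.1, |M p.1 j|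
      else |M p.1 p.2| / 2 with hA
    set V : Fin n × Fin n → Fin n → ℝ := fun p k =>
      if k = p.1 then 1 else if k = p.2 then Real.sign (M p.1 p.2) else 0 with hV
    refine ⟨n * n, fun i => A (finProdFinEquiv.symm i), fun i => V (finProdFinEquiv.symm i),
      ?_, ?_, ?_, ?_, ?_⟩
    · intro i
      set p := finProdFinEquiv.symm i
      by_cases h : p.1 = p.2
      · simp only [hA, if_pos (show (finProdFinEquiv.symm i).1 = (finProdFinEquiv.symm i).2 from h)]
        linarith [hdd (finProdFinEquiv.symm i).1]
      · simp only [hA, if_neg (show ¬(finProdFinEquiv.symm i).1 = (finProdFinEquiv.symm i).2 from h)]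
        positivity
    · intro i h0
      have h1 : V (finProdFinEquiv.symm i) ((finProdFinEquiv.symm i).1) = 0 := congrFun h0 _
      simp [hV] at h1
    · intro i
      set p := finProdFinEquiv.symm i
      have hsub : (Finset.univ.filter (fun j => V p j ≠ 0)) ⊆ {p.1, p.2} := by
        intro j hj
        simp only [Finset.mem_filter, hV] at hj
        simp only [Finset.mem_insert, Finset.mem_singleton]
        by_contra hc
        push_neg at hc
        simp [hc.1, hc.2] at hj
      calc (Finset.univ.filter (fun j => V p j ≠ 0)).card ≤ ({p.1, p.2} : Finset (Fin n)).card :=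
            Finset.card_le_card hsub
        _ ≤ 2 := by
            refine le_trans (Finset.card_insert_le _ _) ?_
            simp
    · intro i j
      simp only [hV]
      split_ifs
      · right; left; rfl
      · exact sgn_mem _
      · left; rfl
    · -- the sum identity
      show M = ∑ i : Fin (n * n), A (finProdFinEquiv.symm i) •
        Matrix.vecMulVec (V (finProdFinEquiv.symm i)) (V (finProdFinEquiv.symm i))
      rw [Equiv.sum_comp finProdFinEquiv.symm
        (fun p => A p • Matrix.vecMulVec (V p) (V p))]
      ext k l
      rw [Matrix.sum_apply]
      simp only [Matrix.smul_apply, Matrix.vecMulVec_apply, smul_eq_mul]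
      rw [Fintype.sum_prod_type]
      have VA1 : ∀ i j : Fin n, i ≠ j → A (i, j) = |M i j| / 2 := by
        intro i j h; simp [hA, h]
      have VA2 : ∀ i : Fin n, A (i, i) = M i i - ∑ j ∈ Finset.univ.erase i, |M i j| := by
        intro i; simp [hA]
      have VV1 : ∀ i j : Fin n, V (i, j) i = 1 := by
        intro i j; simp [hV]
      have VV2 : ∀ i j : Fin n, i ≠ j → V (i, j) j = Real.sign (M i j) := by
        intro i j h; simp [hV, Ne.symm h]
      have VV0 : ∀ i j c : Fin n, c ≠ i → c ≠ j → V (i, j) c = 0 := by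
        intro i j c h1 h2; simp [hV, h1, h2]
      by_cases hkl : k = l
      · subst hkl
        -- split outer sum at i = k
        rw [← Finset.sum_erase_add _ _ (Finset.mem_univ k)]
        have houter : ∀ i ∈ Finset.univ.erase k,
            (∑ j, A (i, j) * (V (i, j) k * V (i, j) k))
              = |M i k| / 2 := by
          intro i hi
          have hik : i ≠ k := (Finset.mem_erase.mp hi).1
          rw [Finset.sum_eq_single k]
          · rw [VA1 i k hik, VV2 i k hik]
            linear_combination sgn_sq_mul_abs (M i k) / 2
          · intro j _ hjk
            rw [VV0 i j k (Ne.symm hik) (Ne.symm hjk)]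
            ring
          · intro h; exact absurd (Finset.mem_univ k) h
        rw [Finset.sum_congr rfl houter]
        have hinner : (∑ j, A (k, j) * (V (k, j) k * V (k, j) k))
            = (M k k - ∑ j ∈ Finset.univ.erase k, |M k j|)
              + ∑ j ∈ Finset.univ.erase k, |M k j| / 2 := by
          rw [← Finset.sum_erase_add _ _ (Finset.mem_univ k)]
          have h1 : A (k, k) * (V (k, k) k * V (k, k) k)
              = M k k - ∑ j ∈ Finset.univ.erase k, |M k j| := by
            rw [VA2 k, VV1 k k]; ring
          have h2 : ∀ j ∈ Finset.univ.erase k,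
              A (k, j) * (V (k, j) k * V (k, j) k) = |M k j| / 2 := by
            intro j hj
            have hjk : j ≠ k := (Finset.mem_erase.mp hj).1
            rw [VA1 k j (Ne.symm hjk), VV1 k j]; ring
          rw [Finset.sum_congr rfl h2, h1]
          ring
        rw [hinner]
        have hflip : ∀ i ∈ Finset.univ.erase k, |M i k| / 2 = |M k i| / 2 := by
          intro i _; rw [hMsymm k i]
        rw [Finset.sum_congr rfl hflip]
        have hhalf : ∑ j ∈ Finset.univ.erase k, |M k j| / 2
            = (∑ j ∈ Finset.univ.erase k, |M k j|) / 2 := (Finset.sum_div _ _ _).symm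
        rw [hhalf]
        ring
      · -- k ≠ l
        have hkl' : k ≠ l := hkl
        have hstep : ∀ i : Fin n, (∑ j, A (i, j) * (V (i, j) k * V (i, j) l))
            = A (i, k) * (V (i, k) k * V (i, k) l) + A (i, l) * (V (i, l) k * V (i, l) l) := by
          intro i
          rw [← Finset.sum_erase_add _ _ (Finset.mem_univ l),
            ← Finset.sum_erase_add _ _ (Finset.mem_erase.mpr ⟨hkl', Finset.mem_univ k⟩)]
          have hzero : ∀ j ∈ (Finset.univ.erase l).erase k,
              A (i, j) * (V (i, j) k * V (i, j) l) = 0 := by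
            intro j hj
            have hjk : j ≠ k := (Finset.mem_erase.mp hj).1
            have hjl : j ≠ l := (Finset.mem_erase.mp (Finset.mem_erase.mp hj).2).1
            by_cases hik : i = k
            · rw [VV0 i j l (fun h => hkl' ((h.trans hik).symm)) (Ne.symm hjl)]
              ring
            · rw [VV0 i j k (fun h => hik h.symm) (Ne.symm hjk)]
              ring
          rw [Finset.sum_eq_zero hzero, zero_add]
        rw [Finset.sum_congr rfl (fun i _ => hstep i)]
        rw [Finset.sum_add_distrib]
        have hs1 : (∑ i, A (i, k) * (V (i, k) k * V (i, k) l)) = M l k / 2 := by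
          rw [Finset.sum_eq_single l]
          · rw [VA1 l k (Ne.symm hkl'), VV2 l k (Ne.symm hkl'), VV1 l k]
            linear_combination sgn_mul_abs (M l k) / 2
          · intro i _ hil
            rw [VV0 i k l (Ne.symm hil) (Ne.symm hkl')]
            ring
          · intro h; exact absurd (Finset.mem_univ l) h
        have hs2 : (∑ i, A (i, l) * (V (i, l) k * V (i, l) l)) = M k l / 2 := by
          rw [Finset.sum_eq_single k]
          · rw [VA1 k l hkl', VV1 k l, VV2 k l hkl']
            linear_combination sgn_mul_abs (M k l) / 2
          · intro i _ hik
            rw [VV0 i l k (Ne.symm hik) hkl']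
            ring
          · intro h; exact absurd (Finset.mem_univ k) h
        rw [hs1, hs2, hMsymm k l]
        ring
  · -- reverse direction: decomposition → dd
    rintro ⟨m, α, v, hα, hv0, hcard, hpm, hMeq⟩
    intro k
    have hentry : ∀ j, M k j = ∑ i, α i * (v i k * v i j) := by
      intro j
      rw [hMeq, Matrix.sum_apply]
      simp [Matrix.smul_apply, Matrix.vecMulVec_apply]
    calc ∑ j ∈ Finset.univ.erase k, |M k j|
        ≤ ∑ j ∈ Finset.univ.erase k, ∑ i, α i * (|v i k| * |v i j|) := by
          refine Finset.sum_le_sum ?_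
          intro j _
          rw [hentry j]
          refine le_trans (Finset.abs_sum_le_sum_abs _ _) ?_
          refine Finset.sum_le_sum ?_
          intro i _
          rw [abs_mul, abs_mul, abs_of_nonneg (hα i)]
      _ = ∑ i, α i * (|v i k| * ∑ j ∈ Finset.univ.erase k, |v i j|) := by
          rw [Finset.sum_comm]
          refine Finset.sum_congr rfl ?_
          intro i _
          rw [Finset.mul_sum, Finset.mul_sum]
      _ ≤ ∑ i, α i * (v i k * v i k) := by
          refine Finset.sum_le_sum ?_
          intro i _
          exact mul_le_mul_of_nonneg_left (key_row_bound (v i) (hcard i) (hpm i) k) (hα i)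
      _ = M k k := (hentry k).symm
end

section
/- (Chordal decomposition of sparse PSD matrices) Let G be an undirected simple graph on the vertex set {1,…,n} that is chordal, i.e., every cycle of length at least 4 has a chord (an edge joining two non-consecutive vertices of the cycle). Let C_1,…,C_p be the maximal cliques of G. Let X be a real symmetric n×n matrix with sparsity pattern G, i.e., X_{ij} = 0 whenever i ≠ j and {i,j} is not an edge of G. Then X is positive semidefinite if and only if there exist real symmetric n×n matrices X_1,…,X_p such that X = Σ_{k=1}^{p} X_k, each X_k is positive semidefinite, and each X_k satisfies (X_k)_{ij} = 0 whenever (i,j) ∉ C_k × C_k. -/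
open Matrix SimpleGraph

variable {n : ℕ} {G : SimpleGraph (Fin n)} {u v w x y z a b : Fin n}
variable {W A B V S : Finset (Fin n)}


/-- Reachability within a finset of vertices. -/
def ReachIn (G : SimpleGraph (Fin n)) (W : Finset (Fin n)) (u v : Fin n) : Prop :=
  ∃ p : G.Walk u v, ∀ z ∈ p.support, z ∈ W

lemma ReachIn.refl (hu : u ∈ W) : ReachIn G W u u :=
  ⟨SimpleGraph.Walk.nil, by simp [hu]⟩

lemma ReachIn.symm (h : ReachIn G W u v) : ReachIn G W v u := by
  obtain ⟨p, hp⟩ := h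
  exact ⟨p.reverse, by simpa using hp⟩

lemma ReachIn.trans (h : ReachIn G W u v) (h' : ReachIn G W v w) : ReachIn G W u w := by
  obtain ⟨p, hp⟩ := h; obtain ⟨q, hq⟩ := h'
  refine ⟨p.append q, fun z hz => ?_⟩
  rw [SimpleGraph.Walk.mem_support_append_iff] at hz
  exact hz.elim (hp z) (hq z)

lemma ReachIn.mem_right (h : ReachIn G W u v) : v ∈ W := by
  obtain ⟨p, hp⟩ := h; exact hp v p.end_mem_support

lemma ReachIn.mem_left (h : ReachIn G W u v) : u ∈ W := by
  obtain ⟨p, hp⟩ := h; exact hp u p.start_mem_support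

lemma ReachIn.adj (h : ReachIn G W u v) (hvw : G.Adj v w) (hw : w ∈ W) : ReachIn G W u w :=
  h.trans ⟨hvw.toWalk, by simp [h.mem_right, hw]⟩

lemma ReachIn.of_support {p : G.Walk u v} (hp : ∀ z ∈ p.support, z ∈ W)
    (hz : z ∈ p.support) : ReachIn G W u z :=
  ⟨p.takeUntil z hz, fun y hy => hp y (p.support_takeUntil_subset hz hy)⟩


lemma length_take_add_drop (p : G.Walk x y) (h : u ∈ p.support) :
    (p.takeUntil u h).length + (p.dropUntil u h).length = p.length := by
  have := congrArg SimpleGraph.Walk.length (p.take_spec h)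
  rwa [SimpleGraph.Walk.length_append] at this

lemma edge_of_length_one {p : G.Walk u w} (h : p.length = 1) : s(u, w) ∈ p.edges := by
  cases p with
  | nil => simp at h
  | cons ha q =>
    simp only [SimpleGraph.Walk.length_cons, add_eq_right] at h
    have := SimpleGraph.Walk.eq_of_length_eq_zero h
    subst this
    simp

/-- Shortcut lemma: a "chord" between two support vertices of a walk gives either an
edge of the walk or a strictly shorter walk with support inside the old support. -/
lemma shortcut (p : G.Walk x y) (hu : u ∈ p.support) (hw : w ∈ p.support)
    (huw : G.Adj u w) :
    s(u, w) ∈ p.edges ∨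
      ∃ q : G.Walk x y, (∀ z ∈ q.support, z ∈ p.support) ∧ q.length < p.length := by
  by_cases h : w ∈ (p.dropUntil u hu).support
  · set d := p.dropUntil u hu with hd
    set t := p.takeUntil u hu with ht
    have hlen : t.length + d.length = p.length := length_take_add_drop p hu
    have hlen2 : (d.takeUntil w h).length + (d.dropUntil w h).length = d.length :=
      length_take_add_drop d h
    have hne : u ≠ w := huw.ne
    have h1 : 1 ≤ (d.takeUntil w h).length := by
      rcases Nat.eq_zero_or_pos (d.takeUntil w h).length with h0 | h0
      · exact absurd (SimpleGraph.Walk.eq_of_length_eq_zero h0) hne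
      · exact h0
    rcases eq_or_lt_of_le h1 with h1 | h1
    · left
      have : s(u, w) ∈ (d.takeUntil w h).edges := edge_of_length_one h1.symm
      exact p.edges_dropUntil_subset hu (d.edges_takeUntil_subset h this)
    · right
      refine ⟨t.append (SimpleGraph.Walk.cons huw (d.dropUntil w h)), ?_, ?_⟩
      · intro z hz
        rw [SimpleGraph.Walk.mem_support_append_iff] at hz
        rcases hz with hz | hz
        · exact p.support_takeUntil_subset hu hz
        · rcases (by simpa using hz : z = u ∨ z ∈ (d.dropUntil w h).support) with rfl | hz
          · exact hu
          · exact p.support_dropUntil_subset hu (d.support_dropUntil_subset h hz)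
      · rw [SimpleGraph.Walk.length_append, SimpleGraph.Walk.length_cons]
        omega
  · have hw' : w ∈ (p.takeUntil u hu).support := by
      have := p.take_spec hu
      rw [← this, SimpleGraph.Walk.mem_support_append_iff] at hw
      exact hw.elim id (fun hh => absurd hh h)
    set t := p.takeUntil u hu with ht
    set d := p.dropUntil u hu with hd
    have hlen : t.length + d.length = p.length := length_take_add_drop p hu
    have hlen2 : (t.takeUntil w hw').length + (t.dropUntil w hw').length = t.length :=
      length_take_add_drop t hw'
    have hne : w ≠ u := huw.ne'
    have h1 : 1 ≤ (t.dropUntil w hw').length := by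
      rcases Nat.eq_zero_or_pos (t.dropUntil w hw').length with h0 | h0
      · exact absurd (SimpleGraph.Walk.eq_of_length_eq_zero h0) hne
      · exact h0
    rcases eq_or_lt_of_le h1 with h1 | h1
    · left
      have : s(w, u) ∈ (t.dropUntil w hw').edges := edge_of_length_one h1.symm
      rw [Sym2.eq_swap]
      exact p.edges_takeUntil_subset hu (t.edges_dropUntil_subset hw' this)
    · right
      refine ⟨(t.takeUntil w hw').append (SimpleGraph.Walk.cons huw.symm d), ?_, ?_⟩
      · intro z hz
        rw [SimpleGraph.Walk.mem_support_append_iff] at hz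
        rcases hz with hz | hz
        · exact p.support_takeUntil_subset hu (t.support_takeUntil_subset hw' hz)
        · rcases (by simpa using hz : z = w ∨ z ∈ d.support) with rfl | hz
          · exact hw
          · exact p.support_dropUntil_subset hu hz
      · rw [SimpleGraph.Walk.length_append, SimpleGraph.Walk.length_cons]
        omega


/-- From a walk between distinct nonadjacent vertices with support in `W`, we can extract a
path of length ≥ 2 with support in `W` such that any `G`-edge between support vertices is an
edge of the path. -/
lemma exists_min_path (hxy : x ≠ y) (hnadj : ¬G.Adj x y)
    (hex : ∃ p : G.Walk x y, ∀ z ∈ p.support, z ∈ W) :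
    ∃ p : G.Walk x y, p.IsPath ∧ (∀ z ∈ p.support, z ∈ W) ∧ 2 ≤ p.length ∧
      ∀ u w, u ∈ p.support → w ∈ p.support → G.Adj u w → s(u, w) ∈ p.edges := by
  classical
  have hex' : ∃ l : ℕ, ∃ p : G.Walk x y, (∀ z ∈ p.support, z ∈ W) ∧ p.length = l := by
    obtain ⟨p, hp⟩ := hex; exact ⟨p.length, p, hp, rfl⟩
  obtain ⟨p₀, hp₀, hp₀l⟩ := Nat.find_spec hex'
  refine ⟨p₀.bypass, p₀.bypass_isPath, fun z hz => hp₀ z (p₀.support_bypass_subset hz), ?_, ?_⟩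
  · -- length ≥ 2
    have h0 : p₀.bypass.length ≠ 0 := fun h => hxy (SimpleGraph.Walk.eq_of_length_eq_zero h)
    have h1 : p₀.bypass.length ≠ 1 := by
      intro h
      exact hnadj (by
        have := @edge_of_length_one n G x y p₀.bypass h
        exact p₀.bypass.adj_of_mem_edges this)
    omega
  · intro u w hu hw huw
    have hmin : p₀.bypass.length = Nat.find hex' := by
      have hle : p₀.bypass.length ≤ Nat.find hex' := hp₀l ▸ p₀.length_bypass_le
      have hge : Nat.find hex' ≤ p₀.bypass.length :=
        Nat.find_le ⟨p₀.bypass, fun z hz => hp₀ z (p₀.support_bypass_subset hz), rfl⟩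
      omega
    rcases shortcut p₀.bypass hu hw huw with h | ⟨q, hq, hql⟩
    · exact h
    · exfalso
      have : Nat.find hex' ≤ q.length :=
        Nat.find_le ⟨q, fun z hz => hp₀ z (p₀.support_bypass_subset (hq z hz)), rfl⟩
      omega
/-- A simple graph is chordal if every cycle of length at least 4 has a chord:
an edge of the graph joining two vertices of the cycle that is not an edge of
the cycle (i.e. joining two non-consecutive vertices of the cycle). -/
def IsChordalGraph {V : Type*} (G : SimpleGraph V) : Prop :=
  ∀ (v : V) (w : G.Walk v v), w.IsCycle → 4 ≤ w.length →
    ∃ a b : V, a ∈ w.support ∧ b ∈ w.support ∧ G.Adj a b ∧ s(a, b) ∉ w.edges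

/-- A chordal graph cannot contain two "internally disjoint" induced-ish connections
between nonadjacent x, y through disjoint regions A and B with no A-B edges. -/
lemma sep_contradiction (hG : IsChordalGraph G) (hxy : x ≠ y) (hnadj : ¬G.Adj x y)
    (hAB : Disjoint A B) (hxA : x ∉ A) (hyA : y ∉ A) (hxB : x ∉ B) (hyB : y ∉ B)
    (hnoedge : ∀ u ∈ A, ∀ w ∈ B, ¬G.Adj u w)
    (hA : ∃ p : G.Walk x y, ∀ z ∈ p.support, z ∈ A ∪ {x, y})
    (hB : ∃ p : G.Walk y x, ∀ z ∈ p.support, z ∈ B ∪ {x, y}) : False := by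
  classical
  obtain ⟨p₁, hp₁path, hp₁supp, hp₁len, hp₁chord⟩ := exists_min_path hxy hnadj hA
  obtain ⟨p₂, hp₂path, hp₂supp, hp₂len, hp₂chord⟩ :=
    exists_min_path (Ne.symm hxy) (fun h => hnadj h.symm) hB
  set c : G.Walk x x := p₁.append p₂ with hc
  -- support memberships
  have hc_supp : ∀ z ∈ c.support, z ∈ p₁.support ∨ z ∈ p₂.support := by
    intro z hz
    rw [hc, SimpleGraph.Walk.mem_support_append_iff] at hz
    exact hz
  have hmemA : ∀ z ∈ p₁.support, z ∈ A ∪ {x, y} := hp₁supp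
  have hmemB : ∀ z ∈ p₂.support, z ∈ B ∪ {x, y} := hp₂supp
  -- no common vertex except x, y
  have hcommon : ∀ z, z ∈ p₁.support → z ∈ p₂.support → z = x ∨ z = y := by
    intro z h1 h2
    have hA' := hmemA z h1
    have hB' := hmemB z h2
    simp only [Finset.mem_union, Finset.mem_insert, Finset.mem_singleton] at hA' hB'
    rcases hA' with hA' | hA' | hA'
    · rcases hB' with hB' | hB' | hB'
      · exact absurd (hAB.forall_ne_finset hA' hB') (by simp)
      · exact Or.inl (by rw [hB'])
      · exact Or.inr (by rw [hB'])
    · exact Or.inl hA'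
    · exact Or.inr hA'
  -- cycle
  have hcycle : c.IsCycle := by
    rw [SimpleGraph.Walk.isCycle_def]
    refine ⟨⟨?_⟩, ?_, ?_⟩
    · -- edges nodup
      rw [hc, SimpleGraph.Walk.edges_append]
      rw [List.nodup_append]
      refine ⟨hp₁path.isTrail.edges_nodup, hp₂path.isTrail.edges_nodup, ?_⟩
      intro e he1 e' he2 hee'
      subst hee'
      induction e with
      | h a b =>
        have ha1 := p₁.fst_mem_support_of_mem_edges he1
        have hb1 := p₁.snd_mem_support_of_mem_edges he1
        have ha2 := p₂.fst_mem_support_of_mem_edges he2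
        have hb2 := p₂.snd_mem_support_of_mem_edges he2
        have hadj : G.Adj a b := p₁.adj_of_mem_edges he1
        rcases hcommon a ha1 ha2 with rfl | rfl <;>
          rcases hcommon b hb1 hb2 with rfl | rfl
        · exact hadj.ne rfl
        · exact hnadj hadj
        · exact hnadj hadj.symm
        · exact hadj.ne rfl
    · -- not nil
      intro hnil
      have : c.length = 0 := by rw [hnil]; rfl
      rw [hc, SimpleGraph.Walk.length_append] at this
      omega
    · -- support tail nodup
      rw [hc, SimpleGraph.Walk.tail_support_append]
      rw [List.nodup_append]
      refine ⟨hp₁path.support_nodup.tail, hp₂path.support_nodup.tail, ?_⟩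
      · intro z hz1 z' hz2 hzz'
        subst hzz'
        have hz1' : z ∈ p₁.support := by
          rw [p₁.support_eq_cons]; exact List.mem_cons_of_mem _ hz1
        have hz2' : z ∈ p₂.support := by
          rw [p₂.support_eq_cons]; exact List.mem_cons_of_mem _ hz2
        have hzx : z ≠ x := by
          intro rfl'
          subst rfl'
          have := hp₁path.support_nodup
          rw [p₁.support_eq_cons] at this
          exact (List.nodup_cons.mp this).1 hz1
        have hzy : z ≠ y := by
          intro rfl'
          subst rfl'
          have := hp₂path.support_nodup
          rw [p₂.support_eq_cons] at this
          exact (List.nodup_cons.mp this).1 hz2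
        rcases hcommon z hz1' hz2' with h | h
        · exact hzx h
        · exact hzy h
  have hclen : 4 ≤ c.length := by
    rw [hc, SimpleGraph.Walk.length_append]; omega
  obtain ⟨a, b, ha, hb, hadj, hne⟩ := hG x c hcycle hclen
  rw [hc, SimpleGraph.Walk.edges_append, List.mem_append] at hne
  push_neg at hne
  have memsup : ∀ z (heq : z = x ∨ z = y), z ∈ p₁.support ∧ z ∈ p₂.support := by
    rintro z (rfl | rfl)
    · exact ⟨p₁.start_mem_support, p₂.end_mem_support⟩
    · exact ⟨p₁.end_mem_support, p₂.start_mem_support⟩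
  have key : ∀ z, z ∈ c.support → (z ∈ A ∧ z ∈ p₁.support) ∨ (z ∈ B ∧ z ∈ p₂.support)
      ∨ (z ∈ p₁.support ∧ z ∈ p₂.support) := by
    intro z hz
    rcases hc_supp z hz with h1 | h2
    · have := hmemA z h1
      simp only [Finset.mem_union, Finset.mem_insert, Finset.mem_singleton] at this
      rcases this with h | h | h
      · exact Or.inl ⟨h, h1⟩
      · exact Or.inr (Or.inr (memsup z (Or.inl h)))
      · exact Or.inr (Or.inr (memsup z (Or.inr h)))
    · have := hmemB z h2
      simp only [Finset.mem_union, Finset.mem_insert, Finset.mem_singleton] at this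
      rcases this with h | h | h
      · exact Or.inr (Or.inl ⟨h, h2⟩)
      · exact Or.inr (Or.inr (memsup z (Or.inl h)))
      · exact Or.inr (Or.inr (memsup z (Or.inr h)))
  rcases key a ha with ⟨haA, ha1⟩ | ⟨haB, ha2⟩ | ⟨ha1, ha2⟩ <;>
    rcases key b hb with ⟨hbA, hb1⟩ | ⟨hbB, hb2⟩ | ⟨hb1, hb2⟩
  · exact hne.1 (hp₁chord a b ha1 hb1 hadj)
  · exact hnoedge a haA b hbB hadj
  · exact hne.1 (hp₁chord a b ha1 hb1 hadj)
  · exact hnoedge b hbA a haB hadj.symm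
  · exact hne.2 (hp₂chord a b ha2 hb2 hadj)
  · exact hne.2 (hp₂chord a b ha2 hb2 hadj)
  · exact hne.1 (hp₁chord a b ha1 hb1 hadj)
  · exact hne.2 (hp₂chord a b ha2 hb2 hadj)
  · exact hne.1 (hp₁chord a b ha1 hb1 hadj)
def SimpIn (G : SimpleGraph (Fin n)) (v : Fin n) (V : Finset (Fin n)) : Prop :=
  v ∈ V ∧ ∀ p ∈ V, ∀ q ∈ V, G.Adj v p → G.Adj v q → p = q ∨ G.Adj p q

/-- If removing `s` from the separator `S` lets `a` reach `b`, then `s` has a neighbor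
reachable from `a` avoiding `S`. -/
lemma sep_neighbor {V S : Finset (Fin n)} {a b s : Fin n} (has : a ≠ s)
    (hsep : ¬ ReachIn G (V \ S) a b)
    (w : G.Walk a b) (hw : ∀ z ∈ w.support, z ∈ V \ S.erase s) :
    ∃ t, t ∈ V \ S ∧ G.Adj s t ∧ ReachIn G (V \ S) a t := by
  classical
  by_cases hs : s ∈ w.support
  · set q := w.takeUntil s hs with hq
    have hq1 : (q.support.count s) = 1 := w.count_support_takeUntil_eq_one hs
    have hqsupp : ∀ z ∈ q.support, z ∈ V \ S.erase s :=
      fun z hz => hw z (w.support_takeUntil_subset hs hz)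
    -- reverse of q is a walk from s to a with positive length
    rcases hr : q.reverse with _ | ⟨hadj, r⟩
    · -- nil case: s = a
      exfalso
      have : q.reverse.length = 0 := by rw [hr]; rfl
      rw [SimpleGraph.Walk.length_reverse] at this
      exact has (SimpleGraph.Walk.eq_of_length_eq_zero this).symm
    · rename_i t
      -- hadj : G.Adj s t, r : G.Walk t a
      have hrsupp : r.support ⊆ q.reverse.support := by
        rw [hr]; exact fun z hz => List.mem_cons_of_mem _ hz
      have hsnotr : s ∉ r.support := by
        intro hsr
        have : q.reverse.support.count s = 1 := by
          rw [SimpleGraph.Walk.support_reverse, List.count_reverse]; exact hq1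
        rw [hr] at this
        simp only [SimpleGraph.Walk.support_cons, List.count_cons_self] at this
        have := List.count_pos_iff.2 hsr
        omega
      have hrVS : ∀ z ∈ r.support, z ∈ V \ S := by
        intro z hz
        have hz1 : z ∈ V \ S.erase s := by
          have : z ∈ q.reverse.support := hrsupp hz
          rw [SimpleGraph.Walk.support_reverse, List.mem_reverse] at this
          exact hqsupp z this
        have hzs : z ≠ s := fun h => hsnotr (h ▸ hz)
        rw [Finset.mem_sdiff] at hz1 ⊢
        exact ⟨hz1.1, fun hzz => hz1.2 (Finset.mem_erase.2 ⟨hzs, hzz⟩)⟩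
      refine ⟨t, hrVS t r.start_mem_support, hadj, ?_⟩
      exact (ReachIn.symm ⟨r, hrVS⟩)
  · exfalso
    refine hsep ⟨w, fun z hz => ?_⟩
    have := hw z hz
    rw [Finset.mem_sdiff] at this ⊢
    refine ⟨this.1, fun hzS => this.2 (Finset.mem_erase.2 ⟨?_, hzS⟩)⟩
    rintro rfl
    exact hs hz
lemma no_walk_pair (hab : a ≠ b) (hnadj : ¬G.Adj a b) (p : G.Walk a b)
    (hp : ∀ z ∈ p.support, z = a ∨ z = b) : False := by
  cases p with
  | nil => exact hab rfl
  | cons h q =>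
    rename_i c
    rcases hp c (by simp) with h' | h'
    · exact h.ne h'.symm
    · exact hnadj (h'.symm ▸ h)

/-- One-sided step for Dirac's theorem. -/
lemma side_simplicial {N : ℕ}
    (IH : ∀ V' : Finset (Fin n), V'.card ≤ N → V'.Nonempty →
      (∃ v, SimpIn G v V') ∧
      (∀ a ∈ V', ∀ b ∈ V', a ≠ b → ¬G.Adj a b →
        ∃ x y, SimpIn G x V' ∧ SimpIn G y V' ∧ x ≠ y ∧ ¬G.Adj x y))
    (hV : V.card ≤ N + 1)
    (hAV : A ⊆ V) (hSV : S ⊆ V)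
    (haA : a ∈ A)
    (hbV : b ∈ V) (hbA : b ∉ A) (hbS : b ∉ S)
    (hclose : ∀ z ∈ A, ∀ p ∈ V, G.Adj z p → p ∈ A ∪ S)
    (hSclique : ∀ s1 ∈ S, ∀ s2 ∈ S, s1 ≠ s2 → G.Adj s1 s2) :
    ∃ x ∈ A, SimpIn G x V := by
  classical
  set VA := A ∪ S with hVA
  have hVAsub : VA ⊆ V.erase b := by
    intro z hz
    rw [Finset.mem_erase]
    rcases Finset.mem_union.1 hz with h | h
    · exact ⟨fun he => hbA (he ▸ h), hAV h⟩
    · exact ⟨fun he => hbS (he ▸ h), hSV h⟩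
  have hVAcard : VA.card ≤ N := by
    have h1 := Finset.card_le_card hVAsub
    have h2 : (V.erase b).card = V.card - 1 := Finset.card_erase_of_mem hbV
    have h3 : 1 ≤ V.card := Finset.card_pos.2 ⟨b, hbV⟩
    omega
  have htransfer : ∀ x ∈ A, SimpIn G x VA → SimpIn G x V := by
    intro x hxA hs
    refine ⟨hAV hxA, fun p hp q hq hxp hxq => ?_⟩
    exact hs.2 p (hclose x hxA p hp hxp) q (hclose x hxA q hq hxq) hxp hxq
  by_cases hcomp : ∀ p ∈ VA, ∀ q ∈ VA, p ≠ q → G.Adj p q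
  · refine ⟨a, haA, hAV haA, fun p hp q hq hap haq => ?_⟩
    by_cases h : p = q
    · exact Or.inl h
    · exact Or.inr (hcomp p (hclose a haA p hp hap) q (hclose a haA q hq haq) h)
  · push_neg at hcomp
    obtain ⟨p, hp, q, hq, hpq, hnadj⟩ := hcomp
    obtain ⟨x0, y0, hx0, hy0, hxy0, hnadj0⟩ :=
      (IH VA hVAcard ⟨a, Finset.mem_union_left _ haA⟩).2 p hp q hq hpq hnadj
    have : x0 ∈ A ∨ y0 ∈ A := by
      rcases Finset.mem_union.1 hx0.1 with h | h
      · exact Or.inl h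
      · rcases Finset.mem_union.1 hy0.1 with h' | h'
        · exact Or.inr h'
        · exact absurd (hSclique x0 h y0 h' hxy0) hnadj0
    rcases this with h | h
    · exact ⟨x0, h, htransfer x0 h hx0⟩
    · exact ⟨y0, h, htransfer y0 h hy0⟩

/-- Dirac's theorem, relativized: every nonempty subset of a chordal graph has a vertex
simplicial within the subset, and two nonadjacent ones if it's not a clique. -/
lemma dirac_aux (hG : IsChordalGraph G) :
    ∀ N : ℕ, ∀ V : Finset (Fin n), V.card ≤ N → V.Nonempty →
      (∃ v, SimpIn G v V) ∧
      (∀ a ∈ V, ∀ b ∈ V, a ≠ b → ¬G.Adj a b →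
        ∃ x y, SimpIn G x V ∧ SimpIn G y V ∧ x ≠ y ∧ ¬G.Adj x y) := by
  intro N
  induction N with
  | zero =>
    intro V hV hne
    have := Finset.card_pos.2 hne
    omega
  | succ N IH =>
    intro V hV hne
    by_cases hcomp : ∀ p ∈ V, ∀ q ∈ V, p ≠ q → G.Adj p q
    · constructor
      · obtain ⟨v, hv⟩ := hne
        refine ⟨v, hv, fun p hp q hq _ _ => ?_⟩
        by_cases h : p = q
        · exact Or.inl h
        · exact Or.inr (hcomp p hp q hq h)
      · intro a ha b hb hab hnadj
        exact absurd (hcomp a ha b hb hab) hnadj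
    · have h2 : ∀ a ∈ V, ∀ b ∈ V, a ≠ b → ¬G.Adj a b →
          ∃ x y, SimpIn G x V ∧ SimpIn G y V ∧ x ≠ y ∧ ¬G.Adj x y := by
        intro a ha b hb hab hnadj
        classical
        -- the set of (a,b)-separators
        set Seps := ((V \ {a, b}).powerset).filter
          (fun S => ¬ ReachIn G (V \ S) a b) with hSeps
        have hSepsne : Seps.Nonempty := by
          refine ⟨V \ {a, b}, ?_⟩
          rw [hSeps, Finset.mem_filter, Finset.mem_powerset]
          refine ⟨subset_rfl, ?_⟩
          rintro ⟨p, hp⟩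
          refine no_walk_pair hab hnadj p (fun z hz => ?_)
          have := hp z hz
          rw [Finset.mem_sdiff, Finset.mem_sdiff] at this
          have h3 : z ∈ ({a, b} : Finset (Fin n)) := by
            by_contra h4
            exact this.2 ⟨this.1, h4⟩
          simpa using h3
        obtain ⟨S, hSmem, hSmin⟩ := Seps.exists_min_image Finset.card hSepsne
        rw [hSeps, Finset.mem_filter, Finset.mem_powerset] at hSmem
        obtain ⟨hSsub, hsep⟩ := hSmem
        have haS : a ∉ S := fun h => by simpa using (Finset.mem_sdiff.1 (hSsub h)).2
        have hbS : b ∉ S := fun h => by simpa using (Finset.mem_sdiff.1 (hSsub h)).2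
        have hSV : S ⊆ V := fun z hz => (Finset.mem_sdiff.1 (hSsub hz)).1
        have haVS : a ∈ V \ S := Finset.mem_sdiff.2 ⟨ha, haS⟩
        have hbVS : b ∈ V \ S := Finset.mem_sdiff.2 ⟨hb, hbS⟩
        set A := (V \ S).filter (fun u => ReachIn G (V \ S) a u) with hA
        set B := (V \ S).filter (fun u => ReachIn G (V \ S) b u) with hB
        have haA : a ∈ A := by
          rw [hA, Finset.mem_filter]; exact ⟨haVS, ReachIn.refl haVS⟩
        have hbB : b ∈ B := by
          rw [hB, Finset.mem_filter]; exact ⟨hbVS, ReachIn.refl hbVS⟩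
        have hmemA : ∀ z, z ∈ A ↔ z ∈ V \ S ∧ ReachIn G (V \ S) a z := by
          intro z; rw [hA, Finset.mem_filter]
        have hmemB : ∀ z, z ∈ B ↔ z ∈ V \ S ∧ ReachIn G (V \ S) b z := by
          intro z; rw [hB, Finset.mem_filter]
        have hABdisj : Disjoint A B := by
          rw [Finset.disjoint_left]
          intro z hzA hzB
          exact hsep (((hmemA z).1 hzA).2.trans ((hmemB z).1 hzB).2.symm)
        have hAV : A ⊆ V := fun z hz => (Finset.mem_sdiff.1 ((hmemA z).1 hz).1).1
        have hBV : B ⊆ V := fun z hz => (Finset.mem_sdiff.1 ((hmemB z).1 hz).1).1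
        have hAS : ∀ z ∈ A, z ∉ S := fun z hz => (Finset.mem_sdiff.1 ((hmemA z).1 hz).1).2
        have hBS : ∀ z ∈ B, z ∉ S := fun z hz => (Finset.mem_sdiff.1 ((hmemB z).1 hz).1).2
        have hcloseA : ∀ z ∈ A, ∀ p ∈ V, G.Adj z p → p ∈ A ∪ S := by
          intro z hz p hp hzp
          by_cases hpS : p ∈ S
          · exact Finset.mem_union_right _ hpS
          · refine Finset.mem_union_left _ ((hmemA p).2 ⟨Finset.mem_sdiff.2 ⟨hp, hpS⟩, ?_⟩)
            exact ((hmemA z).1 hz).2.adj hzp (Finset.mem_sdiff.2 ⟨hp, hpS⟩)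
        have hcloseB : ∀ z ∈ B, ∀ p ∈ V, G.Adj z p → p ∈ B ∪ S := by
          intro z hz p hp hzp
          by_cases hpS : p ∈ S
          · exact Finset.mem_union_right _ hpS
          · refine Finset.mem_union_left _ ((hmemB p).2 ⟨Finset.mem_sdiff.2 ⟨hp, hpS⟩, ?_⟩)
            exact ((hmemB z).1 hz).2.adj hzp (Finset.mem_sdiff.2 ⟨hp, hpS⟩)
        have hnoedge : ∀ u ∈ A, ∀ w ∈ B, ¬G.Adj u w := by
          intro u hu w hw hadj
          rcases Finset.mem_union.1 (hcloseA u hu w (hBV hw) hadj) with h | h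
          · exact Finset.disjoint_left.1 hABdisj h hw
          · exact hBS w hw h
        -- every separator vertex has neighbors reachable from a and from b
        have hnbr : ∀ s ∈ S, (∃ t ∈ A, G.Adj s t) ∧ (∃ t ∈ B, G.Adj s t) := by
          intro s hsS
          have hsa : a ≠ s := fun h => haS (h ▸ hsS)
          have hsb : b ≠ s := fun h => hbS (h ▸ hsS)
          have herase : ¬ (S.erase s ∈ Seps) := by
            intro hmem
            have := hSmin _ hmem
            have hcard : (S.erase s).card = S.card - 1 := Finset.card_erase_of_mem hsS
            have : 1 ≤ S.card := Finset.card_pos.2 ⟨s, hsS⟩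
            omega
          rw [hSeps, Finset.mem_filter, Finset.mem_powerset] at herase
          push_neg at herase
          have hreach : ReachIn G (V \ S.erase s) a b :=
            herase ((Finset.erase_subset _ _).trans hSsub)
          obtain ⟨w, hw⟩ := hreach
          constructor
          · obtain ⟨t, ht, hadj, hre⟩ := sep_neighbor hsa hsep w hw
            exact ⟨t, (hmemA t).2 ⟨ht, hre⟩, hadj⟩
          · have hsep' : ¬ ReachIn G (V \ S) b a := fun h => hsep h.symm
            have hw' : ∀ z ∈ w.reverse.support, z ∈ V \ S.erase s := by
              intro z hz
              rw [SimpleGraph.Walk.support_reverse, List.mem_reverse] at hz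
              exact hw z hz
            obtain ⟨t, ht, hadj, hre⟩ := sep_neighbor hsb hsep' w.reverse hw'
            exact ⟨t, (hmemB t).2 ⟨ht, hre⟩, hadj⟩
        -- the separator is a clique
        have hSclique : ∀ s1 ∈ S, ∀ s2 ∈ S, s1 ≠ s2 → G.Adj s1 s2 := by
          intro s1 hs1 s2 hs2 hne12
          by_contra hnadj12
          obtain ⟨⟨t1, ht1A, ht1adj⟩, ⟨u1, hu1B, hu1adj⟩⟩ := hnbr s1 hs1
          obtain ⟨⟨t2, ht2A, ht2adj⟩, ⟨u2, hu2B, hu2adj⟩⟩ := hnbr s2 hs2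
          have hsuppA : ∀ (c : Fin n) (hc : c ∈ A), ∀ p : G.Walk a c,
              (∀ z ∈ p.support, z ∈ V \ S) → True := fun _ _ _ _ => trivial
          refine sep_contradiction hG hne12 hnadj12 hABdisj
            (fun h => hAS s1 h hs1) (fun h => hAS s2 h hs2)
            (fun h => hBS s1 h hs1) (fun h => hBS s2 h hs2) hnoedge ?_ ?_
          · -- walk from s1 to s2 through A
            obtain ⟨w1, hw1⟩ := ((hmemA t1).1 ht1A).2
            obtain ⟨w2, hw2⟩ := ((hmemA t2).1 ht2A).2
            have hAmem1 : ∀ z ∈ w1.support, z ∈ A := by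
              intro z hz
              exact (hmemA z).2 ⟨hw1 z hz, ReachIn.of_support hw1 hz⟩
            have hAmem2 : ∀ z ∈ w2.support, z ∈ A := by
              intro z hz
              exact (hmemA z).2 ⟨hw2 z hz, ReachIn.of_support hw2 hz⟩
            refine ⟨SimpleGraph.Walk.cons ht1adj
              ((w1.reverse.append w2).append ht2adj.symm.toWalk), fun z hz => ?_⟩
            simp only [SimpleGraph.Walk.support_cons, List.mem_cons,
              SimpleGraph.Walk.mem_support_append_iff] at hz
            rcases hz with rfl | (hz | hz) | hz
            · simp
            · rw [SimpleGraph.Walk.support_reverse, List.mem_reverse] at hz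
              exact Finset.mem_union_left _ (hAmem1 z hz)
            · exact Finset.mem_union_left _ (hAmem2 z hz)
            · rcases (by simpa using hz : z = t2 ∨ z = s2) with rfl | rfl
              · exact Finset.mem_union_left _ ht2A
              · simp
          · -- walk from s2 to s1 through B
            obtain ⟨w1, hw1⟩ := ((hmemB u1).1 hu1B).2
            obtain ⟨w2, hw2⟩ := ((hmemB u2).1 hu2B).2
            have hBmem1 : ∀ z ∈ w1.support, z ∈ B := by
              intro z hz
              exact (hmemB z).2 ⟨hw1 z hz, ReachIn.of_support hw1 hz⟩
            have hBmem2 : ∀ z ∈ w2.support, z ∈ B := by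
              intro z hz
              exact (hmemB z).2 ⟨hw2 z hz, ReachIn.of_support hw2 hz⟩
            refine ⟨SimpleGraph.Walk.cons hu2adj
              ((w2.reverse.append w1).append hu1adj.symm.toWalk), fun z hz => ?_⟩
            simp only [SimpleGraph.Walk.support_cons, List.mem_cons,
              SimpleGraph.Walk.mem_support_append_iff] at hz
            rcases hz with rfl | (hz | hz) | hz
            · simp
            · rw [SimpleGraph.Walk.support_reverse, List.mem_reverse] at hz
              exact Finset.mem_union_left _ (hBmem2 z hz)
            · exact Finset.mem_union_left _ (hBmem1 z hz)
            · rcases (by simpa using hz : z = u1 ∨ z = s1) with rfl | rfl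
              · exact Finset.mem_union_left _ hu1B
              · simp
        -- apply the one-sided lemma on each side
        obtain ⟨xA, hxAA, hxA⟩ := side_simplicial IH hV hAV hSV haA hb
          (fun h => hsep ((hmemA b).1 h).2) hbS hcloseA hSclique
        obtain ⟨xB, hxBB, hxB⟩ := side_simplicial IH hV hBV hSV hbB ha
          (fun h => hsep ((hmemB a).1 h).2.symm) haS hcloseB
          (fun s1 h1 s2 h2 h12 => hSclique s1 h1 s2 h2 h12)
        refine ⟨xA, xB, hxA, hxB, ?_, hnoedge xA hxAA xB hxBB⟩
        intro hEq
        exact Finset.disjoint_left.1 hABdisj hxAA (hEq ▸ hxBB)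
      refine ⟨?_, h2⟩
      push_neg at hcomp
      obtain ⟨p, hp, q, hq, hpq, hnadjpq⟩ := hcomp
      obtain ⟨x, _, hx, _⟩ := h2 p hp q hq hpq hnadjpq
      exact ⟨x, hx⟩

/-- Dirac: a chordal graph has a simplicial vertex in every nonempty vertex subset. -/
lemma exists_simplicial (hG : IsChordalGraph G) (hne : V.Nonempty) :
    ∃ v, SimpIn G v V :=
  (dirac_aux hG V.card V le_rfl hne).1
section MatrixPart

variable {X : Matrix (Fin n) (Fin n) ℝ}

lemma real_psd_quad (hX : X.PosSemidef) (x : Fin n → ℝ) : 0 ≤ x ⬝ᵥ (X *ᵥ x) := by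
  have := hX.dotProduct_mulVec_nonneg x
  simpa using this

lemma psd_diag_nonneg (hX : X.PosSemidef) (i : Fin n) : 0 ≤ X i i := by
  have := real_psd_quad hX (Pi.single i 1)
  simpa [Matrix.mulVec_single_one, Matrix.col_apply, single_dotProduct] using this

lemma hermitian_symm (hX : X.IsHermitian) (i j : Fin n) : X i j = X j i := by
  have := congrFun (congrFun hX j) i
  simpa [Matrix.conjTranspose_apply] using this

lemma psd_row_zero (hX : X.PosSemidef) (v : Fin n) (h : X v v = 0) (i : Fin n) :
    X i v = 0 := by
  by_contra hne
  set t : ℝ := -(X i i + 1) / (2 * X i v) with ht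
  set x : Fin n → ℝ := (Pi.single i 1 : Fin n → ℝ) + t • (Pi.single v 1 : Fin n → ℝ) with hx
  have hq := real_psd_quad hX x
  have hiv : i ≠ v := by rintro rfl; exact hne h
  have hexp : x ⬝ᵥ (X *ᵥ x) = X i i + 2 * t * X i v := by
    rw [hx]
    simp only [Matrix.mulVec_add, Matrix.mulVec_smul, Matrix.mulVec_single_one, Matrix.col_apply,
      add_dotProduct, smul_dotProduct, dotProduct_add,
      dotProduct_smul, single_dotProduct, smul_eq_mul, Pi.add_apply,
      Pi.smul_apply, mul_one]
    rw [hermitian_symm hX.1 v i]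
    simp [Pi.single_apply, hiv, Ne.symm hiv, h]
    ring
  rw [hexp] at hq
  have h2 : (2 : ℝ) * X i v ≠ 0 := by
    intro h0
    rcases mul_eq_zero.1 h0 with h0 | h0
    · norm_num at h0
    · exact hne h0
  have h3 : 2 * t * X i v = -(X i i + 1) := by
    rw [ht]; field_simp
  rw [h3] at hq
  linarith

/-- Rank-one matrices are PSD. -/
lemma rank_one_psd (b : Fin n → ℝ) : (Matrix.of fun i j => b i * b j).PosSemidef := by
  refine Matrix.PosSemidef.of_dotProduct_mulVec_nonneg ?_ ?_
  · ext i j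
    simp [Matrix.conjTranspose_apply, mul_comm]
  · intro x
    have : (Matrix.of fun i j => b i * b j) *ᵥ x = (b ⬝ᵥ x) • b := by
      ext i
      simp [Matrix.mulVec, dotProduct, Finset.mul_sum, mul_comm, mul_left_comm]
    rw [this]
    have : star x ⬝ᵥ (b ⬝ᵥ x) • b = (b ⬝ᵥ x) * (b ⬝ᵥ x) := by
      simp only [star_trivial, dotProduct_smul, smul_eq_mul, dotProduct_comm x b]
    rw [this]
    exact mul_self_nonneg _

end MatrixPart
section MatrixPart2

variable {X : Matrix (Fin n) (Fin n) ℝ}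

lemma scaled_rank_one_psd (c : ℝ) (hc : 0 ≤ c) (b : Fin n → ℝ) :
    (c • Matrix.of fun i j => b i * b j).PosSemidef := by
  refine Matrix.PosSemidef.of_dotProduct_mulVec_nonneg ?_ ?_
  · ext i j
    simp [Matrix.conjTranspose_apply, mul_comm]
  · intro x
    have hmv : (c • Matrix.of fun i j => b i * b j) *ᵥ x = (c * (b ⬝ᵥ x)) • b := by
      ext i
      simp [Matrix.mulVec, dotProduct, Finset.mul_sum, mul_comm, mul_left_comm,
        mul_assoc]
    rw [hmv]
    have : star x ⬝ᵥ (c * (b ⬝ᵥ x)) • b = c * ((b ⬝ᵥ x) * (b ⬝ᵥ x)) := by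
      simp only [star_trivial, dotProduct_smul, smul_eq_mul, dotProduct_comm x b]
      ring
    rw [this]
    exact mul_nonneg hc (mul_self_nonneg _)

/-- The Schur complement step: subtracting the rank-one pivot matrix preserves PSD. -/
lemma schur_psd (hX : X.PosSemidef) (v : Fin n) (ha : 0 < X v v) :
    (X - (X v v)⁻¹ • Matrix.of (fun i j => X i v * X j v)).PosSemidef := by
  set a : ℝ := X v v with haa
  set b : Fin n → ℝ := fun i => X i v with hb
  refine Matrix.PosSemidef.of_dotProduct_mulVec_nonneg ?_ ?_
  · ext i j
    simp only [Matrix.sub_apply, Matrix.conjTranspose_apply, Matrix.smul_apply, Matrix.of_apply,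
      star_trivial, smul_eq_mul]
    rw [hermitian_symm hX.1 j i]
    ring
  · intro x
    simp only [star_trivial]
    set c : ℝ := (b ⬝ᵥ x) / a with hc
    set y : Fin n → ℝ := x - c • (Pi.single v 1 : Fin n → ℝ) with hy
    have hXe : X *ᵥ (Pi.single v 1 : Fin n → ℝ) = b := by
      rw [Matrix.mulVec_single]
      ext i
      simp [hb]
    have heXx : (Pi.single v 1 : Fin n → ℝ) ⬝ᵥ (X *ᵥ x) = b ⬝ᵥ x := by
      rw [single_dotProduct, one_mul]
      simp only [Matrix.mulVec, dotProduct, hb]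
      exact Finset.sum_congr rfl fun j _ => by rw [hermitian_symm hX.1 v j]
    have hq := real_psd_quad hX y
    have h1 : (X *ᵥ x) v = b ⬝ᵥ x := by
      have := heXx
      rwa [single_dotProduct, one_mul] at this
    have h2 : b v = a := by rw [hb, haa]
    have hxb : x ⬝ᵥ b = b ⬝ᵥ x := dotProduct_comm x b
    have hyexp : y ⬝ᵥ (X *ᵥ y) = x ⬝ᵥ (X *ᵥ x) - 2 * c * (b ⬝ᵥ x) + c * c * a := by
      rw [hy]
      simp only [Matrix.mulVec_sub, Matrix.mulVec_smul, hXe, sub_dotProduct,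
        dotProduct_sub, smul_dotProduct, dotProduct_smul,
        single_dotProduct, smul_eq_mul, one_mul, h1, h2, hxb]
      ring
    have hca : c * a = b ⬝ᵥ x := by
      rw [hc]; field_simp
    have hkey : 0 ≤ x ⬝ᵥ (X *ᵥ x) - c * (b ⬝ᵥ x) := by
      have : y ⬝ᵥ (X *ᵥ y) = x ⬝ᵥ (X *ᵥ x) - c * (b ⬝ᵥ x) := by
        rw [hyexp]
        have : c * c * a = c * (c * a) := by ring
        rw [this, hca]
        ring
      rw [this] at hq
      exact hq
    have htarget : x ⬝ᵥ ((X - a⁻¹ • Matrix.of (fun i j => X i v * X j v)) *ᵥ x)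
        = x ⬝ᵥ (X *ᵥ x) - c * (b ⬝ᵥ x) := by
      rw [Matrix.sub_mulVec, dotProduct_sub]
      have hMx : (a⁻¹ • Matrix.of (fun i j => X i v * X j v)) *ᵥ x
          = (a⁻¹ * (b ⬝ᵥ x)) • b := by
        ext i
        simp [Matrix.mulVec, dotProduct, hb, Finset.mul_sum, mul_comm, mul_left_comm,
          mul_assoc]
      rw [hMx, dotProduct_smul]
      have hxb : x ⬝ᵥ b = b ⬝ᵥ x := dotProduct_comm x b
      rw [smul_eq_mul, hxb, hc]
      ring
    rw [htarget]
    exact hkey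

end MatrixPart2
section Decomp

/-- Main induction: a PSD matrix with chordal sparsity pattern supported in `V` decomposes
as a sum of PSD matrices supported on cliques. -/
lemma decomp_aux (hG : IsChordalGraph G) :
    ∀ N : ℕ, ∀ V : Finset (Fin n), V.card ≤ N →
    ∀ X : Matrix (Fin n) (Fin n) ℝ, X.PosSemidef →
      (∀ i j, i ≠ j → ¬G.Adj i j → X i j = 0) →
      (∀ i j, ¬(i ∈ V ∧ j ∈ V) → X i j = 0) →
      ∃ (m : ℕ) (s : Fin m → Finset (Fin n)) (M : Fin m → Matrix (Fin n) (Fin n) ℝ),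
        (∀ t, (M t).PosSemidef) ∧ (∀ t, G.IsClique ↑(s t)) ∧
        (∀ t, ∀ i j, ¬(i ∈ s t ∧ j ∈ s t) → M t i j = 0) ∧ X = ∑ t, M t := by
  intro N
  induction N with
  | zero =>
    intro V hV X hpsd hsparse hsupp
    have hVempty : V = ∅ := Finset.card_eq_zero.1 (le_antisymm hV (Nat.zero_le _))
    refine ⟨0, Fin.elim0, Fin.elim0, fun t => t.elim0, fun t => t.elim0, fun t => t.elim0, ?_⟩
    ext i j
    rw [hsupp i j (by simp [hVempty])]
    simp
  | succ N IH =>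
    intro V hV X hpsd hsparse hsupp
    rcases V.eq_empty_or_nonempty with hVempty | hne
    · refine ⟨0, Fin.elim0, Fin.elim0, fun t => t.elim0, fun t => t.elim0, fun t => t.elim0, ?_⟩
      ext i j
      rw [hsupp i j (by simp [hVempty])]
      simp
    · classical
      obtain ⟨v, hsimp⟩ := exists_simplicial hG hne
      have hvV : v ∈ V := hsimp.1
      have hcard : (V.erase v).card ≤ N := by
        have h2 : (V.erase v).card = V.card - 1 := Finset.card_erase_of_mem hvV
        have h3 : 1 ≤ V.card := Finset.card_pos.2 hne
        omega
      by_cases ha : X v v = 0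
      · -- degenerate pivot: row and column at v vanish
        have hrow : ∀ i, X i v = 0 := psd_row_zero hpsd v ha
        have hcol : ∀ j, X v j = 0 := fun j => by
          rw [hermitian_symm hpsd.1 v j]; exact hrow j
        have hsupp' : ∀ i j, ¬(i ∈ V.erase v ∧ j ∈ V.erase v) → X i j = 0 := by
          intro i j hij
          rcases not_and_or.1 hij with h | h
          · rcases Finset.mem_erase.not.1 h |> not_and_or.1 with h' | h'
            · push_neg at h'
              rw [h']; exact hcol j
            · exact hsupp i j (fun hh => h' hh.1)
          · rcases Finset.mem_erase.not.1 h |> not_and_or.1 with h' | h'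
            · push_neg at h'
              rw [h']; exact hrow i
            · exact hsupp i j (fun hh => h' hh.2)
        exact IH (V.erase v) hcard X hpsd hsparse hsupp'
      · have hapos : 0 < X v v := lt_of_le_of_ne (psd_diag_nonneg hpsd v) (Ne.symm ha)
        set a : ℝ := X v v with haa
        set X1 : Matrix (Fin n) (Fin n) ℝ := a⁻¹ • Matrix.of (fun i j => X i v * X j v)
          with hX1
        set X' : Matrix (Fin n) (Fin n) ℝ := X - X1 with hX'
        set s1 : Finset (Fin n) := insert v ((V.erase v).filter (fun u => G.Adj v u))
          with hs1
        have hX1psd : X1.PosSemidef := scaled_rank_one_psd a⁻¹ (by positivity) _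
        have hX'psd : X'.PosSemidef := schur_psd hpsd v hapos
        -- vanishing of the pivot vector outside s1
        have hb0 : ∀ i, i ∉ s1 → X i v = 0 := by
          intro i hi
          rw [hs1, Finset.mem_insert] at hi
          push_neg at hi
          obtain ⟨hiv, hifil⟩ := hi
          rw [Finset.mem_filter, Finset.mem_erase] at hifil
          by_cases hiV : i ∈ V
          · have : ¬ G.Adj v i := fun h => hifil ⟨⟨hiv, hiV⟩, h⟩
            exact hsparse i v hiv (fun h => this h.symm)
          · exact hsupp i v (fun h => hiV h.1)
        have hX1row : ∀ j, X1 v j = X v j := by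
          intro j
          rw [hX1]
          simp only [Matrix.smul_apply, Matrix.of_apply, smul_eq_mul, ← haa]
          rw [hermitian_symm hpsd.1 v j]
          field_simp
        have hX1col : ∀ i, X1 i v = X i v := by
          intro i
          rw [hX1]
          simp only [Matrix.smul_apply, Matrix.of_apply, smul_eq_mul, ← haa]
          field_simp
        have hX1supp : ∀ i j, ¬(i ∈ s1 ∧ j ∈ s1) → X1 i j = 0 := by
          intro i j hij
          rw [hX1]
          simp only [Matrix.smul_apply, Matrix.of_apply, smul_eq_mul]
          rcases not_and_or.1 hij with h | h
          · rw [hb0 i h]; ring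
          · rw [hb0 j h]; ring
        have hs1clique : G.IsClique ↑s1 := by
          intro p hp q hq hpq
          rw [Finset.mem_coe, hs1, Finset.mem_insert] at hp hq
          rcases hp with rfl | hp
          · rcases hq with rfl | hq
            · exact absurd rfl hpq
            · exact (Finset.mem_filter.1 hq).2
          · rcases hq with rfl | hq
            · exact ((Finset.mem_filter.1 hp).2).symm
            · have hp' := Finset.mem_filter.1 hp
              have hq' := Finset.mem_filter.1 hq
              rcases hsimp.2 p (Finset.mem_of_mem_erase hp'.1) q
                (Finset.mem_of_mem_erase hq'.1) hp'.2 hq'.2 with h | h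
              · exact absurd h hpq
              · exact h
        have hX'rowv : ∀ j, X' v j = 0 := by
          intro j
          rw [hX', Matrix.sub_apply, hX1row, sub_self]
        have hX'colv : ∀ i, X' i v = 0 := by
          intro i
          rw [hX', Matrix.sub_apply, hX1col, sub_self]
        have hX'sparse : ∀ i j, i ≠ j → ¬G.Adj i j → X' i j = 0 := by
          intro i j hij hnadj
          by_cases hiv : i = v
          · rw [hiv]; exact hX'rowv j
          by_cases hjv : j = v
          · rw [hjv]; exact hX'colv i
          rw [hX', Matrix.sub_apply, hsparse i j hij hnadj]
          by_cases hi1 : i ∈ s1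
          · by_cases hj1 : j ∈ s1
            · exact absurd (hs1clique (Finset.mem_coe.2 hi1) (Finset.mem_coe.2 hj1) hij) hnadj
            · rw [hX1supp i j (fun h => hj1 h.2)]; ring
          · rw [hX1supp i j (fun h => hi1 h.1)]; ring
        have hX'supp : ∀ i j, ¬(i ∈ V.erase v ∧ j ∈ V.erase v) → X' i j = 0 := by
          intro i j hij
          rcases not_and_or.1 hij with h | h
          · rcases Finset.mem_erase.not.1 h |> not_and_or.1 with h' | h'
            · push_neg at h'
              rw [h']; exact hX'rowv j
            · have hiV : i ∉ V := fun hh => h' hh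
              rw [hX', Matrix.sub_apply, hsupp i j (fun hh => hiV hh.1)]
              have : i ∉ s1 := by
                rw [hs1, Finset.mem_insert]
                push_neg
                refine ⟨?_, ?_⟩
                · rintro rfl; exact hiV hvV
                · rw [Finset.mem_filter, Finset.mem_erase]
                  rintro ⟨⟨_, hh⟩, _⟩; exact hiV hh
              rw [hX1supp i j (fun hh => this hh.1)]; ring
          · rcases Finset.mem_erase.not.1 h |> not_and_or.1 with h' | h'
            · push_neg at h'
              rw [h']; exact hX'colv i
            · have hjV : j ∉ V := fun hh => h' hh
              rw [hX', Matrix.sub_apply, hsupp i j (fun hh => hjV hh.2)]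
              have : j ∉ s1 := by
                rw [hs1, Finset.mem_insert]
                push_neg
                refine ⟨?_, ?_⟩
                · rintro rfl; exact hjV hvV
                · rw [Finset.mem_filter, Finset.mem_erase]
                  rintro ⟨⟨_, hh⟩, _⟩; exact hjV hh
              rw [hX1supp i j (fun hh => this hh.2)]; ring
        obtain ⟨m, s, M, hMpsd, hMclique, hMsupp, hMsum⟩ :=
          IH (V.erase v) hcard X' hX'psd hX'sparse hX'supp
        refine ⟨m + 1, Fin.cons s1 s, Fin.cons X1 M, ?_, ?_, ?_, ?_⟩
        · intro t
          refine Fin.cases ?_ ?_ t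
          · exact hX1psd
          · exact fun i => hMpsd i
        · intro t
          refine Fin.cases ?_ ?_ t
          · exact hs1clique
          · exact fun i => hMclique i
        · intro t
          refine Fin.cases ?_ ?_ t
          · exact hX1supp
          · exact fun i => hMsupp i
        · rw [Fin.sum_cons, ← hMsum, hX']
          abel

end Decomp
/-- A maximal clique of a simple graph: a clique not properly contained in any
other clique. -/
def IsMaximalClique {V : Type*} (G : SimpleGraph V) (s : Finset V) : Prop :=
  G.IsClique ↑s ∧ ∀ t : Finset V, G.IsClique ↑t → s ⊆ t → t = s

lemma exists_maximal_clique_superset (s : Finset (Fin n)) (hs : G.IsClique ↑s) :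
    ∃ t, IsMaximalClique G t ∧ s ⊆ t := by
  classical
  set cands := Finset.univ.powerset.filter (fun t : Finset (Fin n) => G.IsClique ↑t ∧ s ⊆ t) with hcands
  have hne : cands.Nonempty := by
    refine ⟨s, ?_⟩
    rw [hcands, Finset.mem_filter, Finset.mem_powerset]
    exact ⟨Finset.subset_univ s, hs, subset_rfl⟩
  obtain ⟨t, htmem, htmax⟩ := cands.exists_max_image Finset.card hne
  rw [hcands, Finset.mem_filter] at htmem
  refine ⟨t, ⟨htmem.2.1, ?_⟩, htmem.2.2⟩
  intro u hu htu
  have humem : u ∈ cands := by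
    rw [hcands, Finset.mem_filter, Finset.mem_powerset]
    exact ⟨Finset.subset_univ u, hu, htmem.2.2.trans htu⟩
  exact (Finset.eq_of_subset_of_card_le htu (htmax u humem)).symm

lemma psd_finset_sum {ι : Type*} (s : Finset ι) (f : ι → Matrix (Fin n) (Fin n) ℝ)
    (h : ∀ i ∈ s, (f i).PosSemidef) : (∑ i ∈ s, f i).PosSemidef := by
  classical
  induction s using Finset.induction_on with
  | empty => simpa using Matrix.PosSemidef.zero
  | insert a t hnotmem ih =>
    rw [Finset.sum_insert hnotmem]
    exact (h a (Finset.mem_insert_self a t)).add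
      (ih fun i hi => h i (Finset.mem_insert_of_mem hi))

/-- Chordal decomposition of sparse PSD matrices: let `G` be a
chordal graph on `{1,…,n}` with maximal cliques `C_1, …, C_p`, and let `X` be a
symmetric matrix with sparsity pattern `G` (i.e. `X i j = 0` whenever `i ≠ j`
and `{i,j}` is not an edge of `G`). Then `X` is PSD iff `X = ∑_k X_k` for PSD
matrices `X_k` whose entries vanish outside `C_k × C_k`. -/
theorem chordal_sparse_psd_decomposition
    (n : ℕ) (G : SimpleGraph (Fin n)) (hG : IsChordalGraph G)
    (p : ℕ) (C : Fin p → Finset (Fin n))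
    (hC : ∀ k, IsMaximalClique G (C k))
    (hCall : ∀ S : Finset (Fin n), IsMaximalClique G S → ∃ k, C k = S)
    (X : Matrix (Fin n) (Fin n) ℝ) (hXsym : Xᵀ = X)
    (hXsparse : ∀ i j, i ≠ j → ¬G.Adj i j → X i j = 0) :
    X.PosSemidef ↔
      ∃ Xk : Fin p → Matrix (Fin n) (Fin n) ℝ,
        (∀ k, (Xk k).PosSemidef) ∧
        (∀ k, ∀ i j : Fin n, ¬(i ∈ C k ∧ j ∈ C k) → Xk k i j = 0) ∧
        X = ∑ k, Xk k := by
  classical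
  constructor
  · intro hpsd
    obtain ⟨m, s, M, hMpsd, hMclique, hMsupp, hMsum⟩ :=
      decomp_aux hG Finset.univ.card Finset.univ le_rfl X hpsd hXsparse
        (fun i j hij => absurd ⟨Finset.mem_univ i, Finset.mem_univ j⟩ hij)
    -- assign each piece to a maximal clique index
    have hchoice : ∀ t : Fin m, ∃ k : Fin p, s t ⊆ C k := by
      intro t
      obtain ⟨T, hT, hsT⟩ := exists_maximal_clique_superset (s t) (hMclique t)
      obtain ⟨k, hk⟩ := hCall T hT
      exact ⟨k, hk ▸ hsT⟩
    choose f hf using hchoice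
    refine ⟨fun k => ∑ t ∈ Finset.univ.filter (fun t => f t = k), M t, ?_, ?_, ?_⟩
    · intro k
      exact psd_finset_sum _ _ (fun t _ => hMpsd t)
    · intro k i j hij
      simp only []
      rw [Matrix.sum_apply]
      refine Finset.sum_eq_zero (fun t ht => ?_)
      have hftk : f t = k := (Finset.mem_filter.1 ht).2
      refine hMsupp t i j (fun hmem => hij ⟨hftk ▸ hf t hmem.1, hftk ▸ hf t hmem.2⟩)
    · rw [hMsum]
      exact (Finset.sum_fiberwise_of_maps_to (fun t _ => Finset.mem_univ (f t)) M).symm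
  · rintro ⟨Xk, hpsd, _, hsum⟩
    rw [hsum]
    exact psd_finset_sum _ _ (fun k _ => hpsd k)
end
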